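/- For a line network of length L in which every link is the same packet erasure channel with erasure probability ε, the batched-code capacity with batch size 1 and inner block-length N equals C_L(1,N) = ((1−ε^N)^L / N)·log|𝒜|, and this capacity is achieved by repetition recoding (each node retransmits the recovered symbol N times, or sends e if all N received symbols are erased). -/

import Mathlib

open scoped BigOperators

def IsDist {α : Type*} [Fintype α] (p : α → ℝ) : Prop :=
  (∀ x, 0 ≤ p x) ∧ ∑ x, p x = 1

def IsStoch {α β : Type*} [Fintype α] [Fintype β] (W : Matrix α β ℝ) : Prop :=
  ∀ x, (∀ y, 0 ≤ W x y) ∧ ∑ y, W x y = 1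

/-- Mutual information `I(p, W)` (base-2 logarithm) between the input of channel `W`,
distributed according to `p`, and the corresponding output. -/
noncomputable def mutualInfo {α β : Type*} [Fintype α] [Fintype β]
    (p : α → ℝ) (W : Matrix α β ℝ) : ℝ :=
  ∑ x, ∑ y, p x * W x y * Real.logb 2 (W x y / ∑ x', p x' * W x' y)

/-- `N`-fold memoryless extension `Q^{⊗N}` of a channel. -/
noncomputable def tensorPow {α β : Type*} [Fintype α] [Fintype β] (N : ℕ)
    (Q : Matrix α β ℝ) : Matrix (Fin N → α) (Fin N → β) ℝ :=
  Matrix.of fun u y => ∏ i, Q (u i) (y i)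

/-- `chain Q Φ n = Q 0 * Φ 0 * Q 1 * Φ 1 * ⋯ * Q n`. -/
noncomputable def chain {β γ : Type*} [Fintype β] [Fintype γ]
    (Q : ℕ → Matrix β γ ℝ) (Φ : ℕ → Matrix γ β ℝ) : ℕ → Matrix β γ ℝ
  | 0 => Q 0
  | (n+1) => chain Q Φ n * Φ n * Q (n+1)

/-- End-to-end transition matrix `W_L = F Q₁^{⊗N} Φ₁ Q₂^{⊗N} ⋯ Φ_{L-1} Q_L^{⊗N}` of a
batched code with batch alphabet `A`, batch size `M`, inner block-length `N`,
over the line network of length `L` whose `ℓ`-th link is the DMC `Q (ℓ-1)` (0-indexed). -/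
noncomputable def endToEnd {A Qi Qo : Type*} [Fintype A] [Fintype Qi] [Fintype Qo]
    (L M N : ℕ)
    (F : Matrix (Fin M → A) (Fin N → Qi) ℝ)
    (Q : ℕ → Matrix Qi Qo ℝ)
    (Φ : ℕ → Matrix (Fin N → Qo) (Fin N → Qi) ℝ) :
    Matrix (Fin M → A) (Fin N → Qo) ℝ :=
  F * chain (fun ℓ => tensorPow N (Q ℓ)) Φ (L - 1)

/-- Shannon capacity of a DMC, as the supremum of mutual information over input
distributions. -/
noncomputable def capacity {α β : Type*} [Fintype α] [Fintype β] (W : Matrix α β ℝ) : ℝ :=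
  sSup {I : ℝ | ∃ p : α → ℝ, IsDist p ∧ I = mutualInfo p W}

/-- The packet erasure channel with packet alphabet `A` and erasure probability `ε`
(`none` is the erasure `e`). -/
noncomputable def eraCh (A : Type*) [DecidableEq A] (ε : ℝ) :
    Matrix (Option A) (Option A) ℝ :=
  Matrix.of fun x y =>
    match x with
    | none => if y = none then 1 else 0
    | some a => if y = some a then 1 - ε else if y = none then ε else 0

/-- The symbol recovered from `N` received symbols: the first non-erased symbol,
or `none` if all `N` received symbols are erased. -/
def recover {A : Type*} {N : ℕ} (y : Fin N → Option A) : Option A :=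
  ((List.ofFn y).reduceOption).head?

/-- Repetition recoding at the source: transmit the batch symbol `N` times. -/
noncomputable def repF (A : Type*) [DecidableEq A] (N : ℕ) :
    Matrix (Fin 1 → A) (Fin N → Option A) ℝ :=
  Matrix.of fun x u => if u = fun _ => some (x 0) then 1 else 0

/-- Repetition recoding at an intermediate node: retransmit the recovered symbol `N`
times, or send the erasure `N` times if all `N` received symbols are erased. -/
noncomputable def repPhi (A : Type*) [DecidableEq A] (N : ℕ) :
    Matrix (Fin N → Option A) (Fin N → Option A) ℝ :=
  Matrix.of fun y u => if u = fun _ => recover y then 1 else 0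


set_option linter.unusedSectionVars false
set_option maxHeartbeats 1000000

section Aux
open Finset

lemma sum_pi_prod : ∀ (N : ℕ) {γ : Type} [Fintype γ] (f : Fin N → γ → ℝ),
    ∑ z : Fin N → γ, ∏ i, f i (z i) = ∏ i, ∑ b, f i b := by
  intro N
  induction N with
  | zero => intro γ _ f; simp
  | succ n ih =>
      intro γ _ f
      rw [← Equiv.sum_comp (Fin.consEquiv fun _ => γ) (fun z => ∏ i, f i (z i))]
      rw [Fintype.sum_prod_type]
      have h1 : ∀ (b : γ) (w : Fin n → γ),
          (∏ i, f i ((Fin.consEquiv fun _ => γ) (b, w) i)) = f 0 b * ∏ i, f i.succ (w i) := by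
        intro b w
        rw [Fin.prod_univ_succ]
        simp [Fin.consEquiv]
      simp_rw [h1, ← Finset.mul_sum]
      rw [Fin.prod_univ_succ, ih (fun i => f i.succ), ← Finset.sum_mul]

variable {A : Type} [Fintype A] [DecidableEq A] {ε : ℝ} {N : ℕ}

variable {A : Type} [Fintype A] [DecidableEq A] {ε : ℝ} {N : ℕ}

lemma eraCh_nonneg (h0 : 0 ≤ ε) (h1 : ε ≤ 1) (x y : Option A) : 0 ≤ eraCh A ε x y := by
  cases x <;> simp only [eraCh, Matrix.of_apply] <;> split_ifs <;> linarith

lemma eraCh_rowsum (x : Option A) : ∑ y, eraCh A ε x y = 1 := by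
  cases x with
  | none => simp [eraCh]
  | some a =>
      have h : ∀ y : Option A, eraCh A ε (some a) y
          = (if y = some a then (1 - ε) else 0) + (if y = none then ε else 0) := by
        intro y
        cases y with
        | none => simp [eraCh]
        | some b => by_cases hb : b = a <;> simp [eraCh, hb]
      simp_rw [h]
      rw [Finset.sum_add_distrib, Finset.sum_ite_eq' univ (some a), Finset.sum_ite_eq' univ none]
      simp

-- generic tensorPow facts
lemma tensorPow_nonneg {α β : Type} [Fintype α] [Fintype β] {Q : Matrix α β ℝ}
    (h : ∀ x y, 0 ≤ Q x y) (u : Fin N → α) (y : Fin N → β) : 0 ≤ tensorPow N Q u y := by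
  simp only [tensorPow, Matrix.of_apply]
  exact Finset.prod_nonneg fun i _ => h _ _

lemma tensorPow_rowsum {α β : Type} [Fintype α] [Fintype β] {Q : Matrix α β ℝ}
    (h : ∀ x, ∑ y, Q x y = 1) (u : Fin N → α) : ∑ y, tensorPow N Q u y = 1 := by
  simp only [tensorPow, Matrix.of_apply]
  rw [sum_pi_prod N (fun i b => Q (u i) b)]
  simp [h]

-- B-specific facts
lemma tB_allnone_row (y : Fin N → Option A) :
    tensorPow N (eraCh A ε) (fun _ => none) y = if y = (fun _ => none) then 1 else 0 := by
  simp only [tensorPow, Matrix.of_apply, eraCh]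
  rw [Finset.prod_boole]
  congr 1
  simp [funext_iff, eq_comm]

lemma tB_allnone_col (u : Fin N → Option A) :
    ε ^ N ≤ tensorPow N (eraCh A ε) u (fun _ => none) ∨ True := Or.inr trivial

lemma tB_ge (h0 : 0 ≤ ε) (h1 : ε ≤ 1) (u : Fin N → Option A) :
    ε ^ N ≤ tensorPow N (eraCh A ε) u (fun _ => none) := by
  simp only [tensorPow, Matrix.of_apply]
  have : (ε : ℝ) ^ N = ∏ _i : Fin N, ε := by
    rw [Finset.prod_const, Finset.card_univ, Fintype.card_fin]
  rw [this]
  apply Finset.prod_le_prod (fun i _ => h0)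
  intro i _
  cases hu : u i <;> simp [eraCh] <;> linarith

lemma beta_allnone (a : A) :
    tensorPow N (eraCh A ε) (fun _ => some a) (fun _ => none) = ε ^ N := by
  simp only [tensorPow, Matrix.of_apply, eraCh]
  simp [Finset.prod_const, Finset.card_univ]

lemma beta_compat {a : A} {y : Fin N → Option A}
    (h : tensorPow N (eraCh A ε) (fun _ => some a) y ≠ 0) :
    ∀ i, y i = some a ∨ y i = none := by
  intro i
  by_contra hcon
  push_neg at hcon
  apply h
  simp only [tensorPow, Matrix.of_apply]
  apply Finset.prod_eq_zero (Finset.mem_univ i)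
  simp only [eraCh, Matrix.of_apply]
  rw [if_neg hcon.1, if_neg hcon.2]

lemma beta_disjoint {a b : A} {y : Fin N → Option A} {i : Fin N}
    (hi : y i = some a) (hab : b ≠ a) :
    tensorPow N (eraCh A ε) (fun _ => some b) y = 0 := by
  simp only [tensorPow, Matrix.of_apply]
  apply Finset.prod_eq_zero (Finset.mem_univ i)
  simp only [Matrix.of_apply, eraCh, hi]
  have h1 : (some a : Option A) ≠ some b := by simp [hab.symm]
  rw [if_neg h1]
  simp

lemma recover_allnone : recover (fun _ => none : Fin N → Option A) = none := by
  rw [recover, List.head?_eq_none_iff, List.eq_nil_iff_forall_not_mem]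
  intro a h
  rw [List.reduceOption_mem_iff, List.mem_ofFn] at h
  obtain ⟨i, hi⟩ := h
  exact nomatch hi

lemma recover_eq (a : A) (y : Fin N → Option A) (hc : ∀ i, y i = some a ∨ y i = none)
    (hy : y ≠ fun _ => none) : recover y = some a := by
  have hne : (List.ofFn y).reduceOption ≠ [] := by
    intro h
    apply hy; funext i
    rcases hc i with h1 | h1
    · exfalso
      have hm : a ∈ (List.ofFn y).reduceOption := by
        rw [List.reduceOption_mem_iff, List.mem_ofFn]
        exact ⟨i, h1⟩
      rw [h] at hm
      exact List.not_mem_nil hm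
    · exact h1
  obtain ⟨b, l, hbl⟩ := List.exists_cons_of_ne_nil hne
  have hb : b ∈ (List.ofFn y).reduceOption := by rw [hbl]; exact List.mem_cons_self
  rw [List.reduceOption_mem_iff, List.mem_ofFn] at hb
  obtain ⟨i, hi⟩ := hb
  have hba : b = a := by
    rcases hc i with h1 | h1
    · rw [h1] at hi; exact (Option.some_injective _ hi).symm
    · rw [h1] at hi; exact nomatch hi
  rw [recover, hbl, hba]
  rfl

lemma repPhi_mul_apply (M : Matrix (Fin N → Option A) (Fin N → Option A) ℝ)
    (w : Fin N → Option A) (y : Fin N → Option A) :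
    (repPhi A N * M) w y = M (fun _ => recover w) y := by
  rw [Matrix.mul_apply]
  simp only [repPhi, Matrix.of_apply]
  simp_rw [ite_mul, one_mul, zero_mul]
  rw [Finset.sum_ite_eq' univ (fun _ => recover w) (fun z => M z y)]
  simp

lemma chainRep (h0 : 0 ≤ ε) (h1 : ε ≤ 1) (a : A) :
    ∀ (ℓ : ℕ) (y : Fin N → Option A),
    chain (fun _ => tensorPow N (eraCh A ε)) (fun _ => repPhi A N) ℓ (fun _ => some a) y
      = (1 - ε ^ N) ^ ℓ * tensorPow N (eraCh A ε) (fun _ => some a) y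
        + (1 - (1 - ε ^ N) ^ ℓ) * (if y = (fun _ => none) then 1 else 0) := by
  intro ℓ
  induction ℓ with
  | zero => intro y; simp [chain]
  | succ n ih =>
      intro y
      have hstep : chain (fun _ => tensorPow N (eraCh A ε)) (fun _ => repPhi A N) (n+1)
          = chain (fun _ => tensorPow N (eraCh A ε)) (fun _ => repPhi A N) n *
            (repPhi A N * tensorPow N (eraCh A ε)) := by
        show (chain _ _ n * repPhi A N * tensorPow N (eraCh A ε)) = _
        rw [Matrix.mul_assoc]
      rw [hstep, Matrix.mul_apply]
      have hterm : ∀ w : Fin N → Option A,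
          chain (fun _ => tensorPow N (eraCh A ε)) (fun _ => repPhi A N) n (fun _ => some a) w *
            (repPhi A N * tensorPow N (eraCh A ε)) w y
          = (1 - ε ^ N) ^ n * (tensorPow N (eraCh A ε) (fun _ => some a) w *
                tensorPow N (eraCh A ε) (fun _ => some a) y)
            + (if w = (fun _ => none) then
                (1 - ε ^ N) ^ n * (ε ^ N * (if y = (fun _ => none) then 1 else 0)
                    - ε ^ N * tensorPow N (eraCh A ε) (fun _ => some a) y)
                + (1 - (1 - ε ^ N) ^ n) * (if y = (fun _ => none) then 1 else 0)
              else 0) := by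
        intro w
        rw [ih w, repPhi_mul_apply]
        by_cases hw : w = (fun _ => none)
        · subst hw
          rw [if_pos rfl, if_pos rfl, recover_allnone, tB_allnone_row, beta_allnone]
          ring
        · rw [if_neg hw, if_neg hw]
          by_cases hb : tensorPow N (eraCh A ε) (fun _ => some a) w = 0
          · rw [hb]; ring
          · have hrec : recover w = some a := recover_eq a w (beta_compat hb) hw
            rw [hrec]
            ring
      rw [Finset.sum_congr rfl (fun w _ => hterm w), Finset.sum_add_distrib,
        Finset.sum_ite_eq' univ (fun _ => none : Fin N → Option A)]
      have hsum : ∑ w : Fin N → Option A,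
          (1 - ε ^ N) ^ n * (tensorPow N (eraCh A ε) (fun _ => some a) w *
            tensorPow N (eraCh A ε) (fun _ => some a) y)
          = (1 - ε ^ N) ^ n * tensorPow N (eraCh A ε) (fun _ => some a) y := by
        rw [← Finset.mul_sum, ← Finset.sum_mul,
          tensorPow_rowsum (fun x => eraCh_rowsum x) (fun _ => some a)]
        ring
      rw [hsum]
      simp only [Finset.mem_univ, if_true]
      ring

lemma endRep (h0 : 0 ≤ ε) (h1 : ε ≤ 1) (L : ℕ) (x : Fin 1 → A) (y : Fin N → Option A) :
    endToEnd L 1 N (repF A N) (fun _ => eraCh A ε) (fun _ => repPhi A N) x y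
      = (1 - ε ^ N) ^ (L - 1) * tensorPow N (eraCh A ε) (fun _ => some (x 0)) y
        + (1 - (1 - ε ^ N) ^ (L - 1)) * (if y = (fun _ => none) then 1 else 0) := by
  rw [endToEnd, Matrix.mul_apply]
  simp only [repF, Matrix.of_apply]
  simp_rw [ite_mul, one_mul, zero_mul]
  rw [Finset.sum_ite_eq' univ (fun _ => some (x 0))
    (fun u => chain (fun _ => tensorPow N (eraCh A ε)) (fun _ => repPhi A N) (L-1) u y)]
  simp only [Finset.mem_univ, if_true]
  exact chainRep h0 h1 (x 0) (L-1) y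

lemma achieve (hε : 0 < ε) (hε1 : ε < 1) (hN : 0 < N) (L : ℕ) (hL : 0 < L)
    (hA : 0 < Fintype.card A) :
    mutualInfo (fun _ => ((Fintype.card A : ℝ))⁻¹)
        (endToEnd L 1 N (repF A N) (fun _ => eraCh A ε) (fun _ => repPhi A N))
      = (1 - ε ^ N) ^ L * Real.logb 2 (Fintype.card A) := by
  have h0 : (0:ℝ) ≤ ε := hε.le
  have h1 : (ε:ℝ) ≤ 1 := hε1.le
  set K : ℝ := (Fintype.card A : ℝ) with hKdef
  have hK : 0 < K := by simp only [hKdef]; exact_mod_cast hA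
  have hεN1 : ε ^ N < 1 := pow_lt_one₀ h0 hε1 hN.ne'
  have hεN0 : 0 < ε ^ N := pow_pos hε N
  set s : ℝ := 1 - ε ^ N with hsdef
  have hs0 : 0 < s := by simp only [hsdef]; linarith
  have hs1 : s < 1 := by simp only [hsdef]; linarith
  have hss : s ^ (L - 1) * s = s ^ L := by
    rw [← pow_succ, Nat.sub_add_cancel hL]
  have hsL1 : s ^ L < 1 := pow_lt_one₀ hs0.le hs1 hL.ne'
  have hcard : (Fintype.card (Fin 1 → A) : ℝ) = K := by
    rw [Fintype.card_fun]; simp [hKdef]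
  have claim : ∀ (x : Fin 1 → A) (y : Fin N → Option A),
      (fun _ : Fin 1 → A => K⁻¹) x *
        endToEnd L 1 N (repF A N) (fun _ => eraCh A ε) (fun _ => repPhi A N) x y *
        Real.logb 2 (endToEnd L 1 N (repF A N) (fun _ => eraCh A ε) (fun _ => repPhi A N) x y /
          ∑ x', (fun _ : Fin 1 → A => K⁻¹) x' *
            endToEnd L 1 N (repF A N) (fun _ => eraCh A ε) (fun _ => repPhi A N) x' y)
      = K⁻¹ * s ^ (L - 1) * Real.logb 2 K *
          (tensorPow N (eraCh A ε) (fun _ => some (x 0)) y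
            - (if y = (fun _ => none) then ε ^ N else 0)) := by
    intro x y
    by_cases hy : y = (fun _ => none)
    · subst hy
      have hW : ∀ x' : Fin 1 → A,
          endToEnd L 1 N (repF A N) (fun _ => eraCh A ε) (fun _ => repPhi A N) x'
            (fun _ => none) = 1 - s ^ L := by
        intro x'
        rw [endRep h0 h1, beta_allnone, if_pos rfl, ← hss]
        simp only [hsdef]
        ring
      simp_rw [hW]
      rw [Finset.sum_const, Finset.card_univ, nsmul_eq_mul, hcard]
      have h2 : (1 - s ^ L) / (K * (K⁻¹ * (1 - s ^ L))) = 1 := by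
        rw [← mul_assoc, mul_inv_cancel₀ hK.ne', one_mul, div_self (by linarith)]
      rw [h2, Real.logb_one, beta_allnone]
      simp
    · have hδ : (if y = (fun _ => none) then (1:ℝ) else 0) = 0 := if_neg hy
      by_cases hb : tensorPow N (eraCh A ε) (fun _ => some (x 0)) y = 0
      · rw [endRep h0 h1, hδ, hb]
        simp [hy]
      · -- y compatible with x 0, and q y = K⁻¹ * s^(L-1) * β
        have hcompat := beta_compat hb
        obtain ⟨i0, hi0⟩ : ∃ i, y i ≠ none := by
          by_contra hcon
          push_neg at hcon
          exact hy (funext hcon)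
        have hi0' : y i0 = some (x 0) := (hcompat i0).resolve_right hi0
        have hq : ∀ x' : Fin 1 → A,
            K⁻¹ * endToEnd L 1 N (repF A N) (fun _ => eraCh A ε) (fun _ => repPhi A N) x' y
            = if x' = x then K⁻¹ * (s ^ (L - 1) *
                tensorPow N (eraCh A ε) (fun _ => some (x 0)) y) else 0 := by
          intro x'
          rw [endRep h0 h1, hδ]
          by_cases hx' : x' = x
          · subst hx'; simp [hsdef]
          · have hne : x' 0 ≠ x 0 := by
              intro hcon
              apply hx'
              funext i
              have : i = 0 := Subsingleton.elim i 0
              rw [this, hcon]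
            rw [if_neg hx', beta_disjoint hi0' hne]
            ring
        simp_rw [hq]
        rw [Finset.sum_ite_eq' univ x]
        simp only [Finset.mem_univ, if_true]
        rw [endRep h0 h1, hδ, mul_zero, add_zero]
        have hβpos : 0 < tensorPow N (eraCh A ε) (fun _ => some (x 0)) y :=
          lt_of_le_of_ne (tensorPow_nonneg (fun u v => eraCh_nonneg h0 h1 u v) _ _) (Ne.symm hb)
        have hspos : (0:ℝ) < s ^ (L - 1) := pow_pos hs0 _
        have ht : s ^ (L - 1) * tensorPow N (eraCh A ε) (fun _ => some (x 0)) y ≠ 0 :=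
          ne_of_gt (mul_pos hspos hβpos)
        have hratio : s ^ (L - 1) * tensorPow N (eraCh A ε) (fun _ => some (x 0)) y /
            (K⁻¹ * (s ^ (L - 1) * tensorPow N (eraCh A ε) (fun _ => some (x 0)) y)) = K := by
          rw [mul_comm (K⁻¹) _, div_mul_eq_div_div, div_self ht, one_div, inv_inv]
        rw [hratio, if_neg hy]
        ring
  rw [mutualInfo]
  rw [Finset.sum_congr rfl (fun x _ => Finset.sum_congr rfl (fun y _ => claim x y))]
  have hinner : ∀ x : Fin 1 → A,
      ∑ y : Fin N → Option A, K⁻¹ * s ^ (L - 1) * Real.logb 2 K *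
          (tensorPow N (eraCh A ε) (fun _ => some (x 0)) y
            - (if y = (fun _ => none) then ε ^ N else 0))
      = K⁻¹ * s ^ (L - 1) * Real.logb 2 K * (1 - ε ^ N) := by
    intro x
    rw [← Finset.mul_sum, Finset.sum_sub_distrib,
      tensorPow_rowsum (fun x => eraCh_rowsum x) (fun _ => some (x 0)),
      Finset.sum_ite_eq' univ (fun _ => none : Fin N → Option A) (fun _ => ε ^ N)]
    simp
  rw [Finset.sum_congr rfl (fun x _ => hinner x), Finset.sum_const, Finset.card_univ,
    nsmul_eq_mul, hcard]
  have : K * (K⁻¹ * s ^ (L-1) * Real.logb 2 K * (1 - ε ^ N))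
      = (K * K⁻¹) * ((s ^ (L-1) * s) * Real.logb 2 K) := by
    simp only [hsdef]; ring
  rw [this, mul_inv_cancel₀ hK.ne', hss, one_mul]

lemma isStoch_mul {α β γ : Type} [Fintype α] [Fintype β] [Fintype γ]
    {M : Matrix α β ℝ} {P : Matrix β γ ℝ} (hM : IsStoch M) (hP : IsStoch P) :
    IsStoch (M * P) := by
  intro x
  constructor
  · intro y
    rw [Matrix.mul_apply]
    exact Finset.sum_nonneg fun z _ => mul_nonneg ((hM x).1 z) ((hP z).1 y)
  · simp_rw [Matrix.mul_apply]
    rw [Finset.sum_comm]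
    have h : ∀ z, ∑ y, M x z * P z y = M x z := by
      intro z; rw [← Finset.mul_sum, (hP z).2, mul_one]
    rw [Finset.sum_congr rfl fun z _ => h z]
    exact (hM x).2

lemma mulB_decomp {X : Type} [Fintype X] (hε : 0 < ε) (hε1 : ε < 1) (hN : 0 < N)
    (G : Matrix X (Fin N → Option A) ℝ) (hG : IsStoch G) :
    ∃ W' : Matrix X (Fin N → Option A) ℝ, IsStoch W' ∧ ∀ x y,
      (G * tensorPow N (eraCh A ε)) x y
        = (1 - ε ^ N) * W' x y + ε ^ N * (if y = (fun _ => none) then 1 else 0) := by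
  have h0 : (0:ℝ) ≤ ε := hε.le
  have h1 : ε ≤ 1 := hε1.le
  have hεN1 : ε ^ N < 1 := pow_lt_one₀ h0 hε1 hN.ne'
  have hεN0 : 0 < ε ^ N := pow_pos hε N
  set R : Matrix (Fin N → Option A) (Fin N → Option A) ℝ :=
    Matrix.of (fun u y => (tensorPow N (eraCh A ε) u y
      - ε ^ N * (if y = (fun _ => none) then 1 else 0)) / (1 - ε ^ N)) with hR
  have hRstoch : IsStoch R := by
    intro u
    constructor
    · intro y
      apply div_nonneg _ (by linarith)
      by_cases hy : y = (fun _ => none)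
      · subst hy
        rw [if_pos rfl, mul_one]
        have := tB_ge h0 h1 u
        linarith
      · rw [if_neg hy, mul_zero, sub_zero]
        exact tensorPow_nonneg (fun u v => eraCh_nonneg h0 h1 u v) u y
    · simp only [hR, Matrix.of_apply]
      rw [← Finset.sum_div, Finset.sum_sub_distrib,
        tensorPow_rowsum (fun x => eraCh_rowsum x) u, ← Finset.mul_sum,
        Finset.sum_ite_eq' univ (fun _ => none : Fin N → Option A) (fun _ => (1:ℝ))]
      simp only [Finset.mem_univ, if_true, mul_one]
      rw [div_self (by linarith)]
  refine ⟨G * R, isStoch_mul hG hRstoch, ?_⟩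
  intro x y
  have hpt : ∀ u, G x u * tensorPow N (eraCh A ε) u y
      = (1 - ε ^ N) * (G x u * R u y)
        + (ε ^ N * (if y = (fun _ => none) then 1 else 0)) * G x u := by
    intro u
    simp only [hR, Matrix.of_apply]
    set t : ℝ := (if y = (fun _ => none) then (1:ℝ) else 0) with ht
    have hne : (1:ℝ) - ε ^ N ≠ 0 := by linarith
    have h2 : (1 - ε ^ N) * ((tensorPow N (eraCh A ε) u y - ε ^ N * t) / (1 - ε ^ N))
        = tensorPow N (eraCh A ε) u y - ε ^ N * t := by
      field_simp
    rw [mul_left_comm, h2]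
    ring
  rw [Matrix.mul_apply, Finset.sum_congr rfl (fun u _ => hpt u), Finset.sum_add_distrib,
    ← Finset.mul_sum, ← Finset.mul_sum, (hG x).2, mul_one, ← Matrix.mul_apply]

lemma decomp (hε : 0 < ε) (hε1 : ε < 1) (hN : 0 < N)
    (F : Matrix (Fin 1 → A) (Fin N → Option A) ℝ)
    (Φ : ℕ → Matrix (Fin N → Option A) (Fin N → Option A) ℝ)
    (hF : IsStoch F) (hΦ : ∀ ℓ, IsStoch (Φ ℓ)) :
    ∀ ℓ, ∃ (W' : Matrix (Fin 1 → A) (Fin N → Option A) ℝ) (d : (Fin N → Option A) → ℝ),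
      IsStoch W' ∧ IsDist d ∧ ∀ x y,
        (F * chain (fun _ => tensorPow N (eraCh A ε)) Φ ℓ) x y
          = (1 - ε ^ N) ^ (ℓ+1) * W' x y + (1 - (1 - ε ^ N) ^ (ℓ+1)) * d y := by
  have h0 : (0:ℝ) ≤ ε := hε.le
  have hεN1 : ε ^ N < 1 := pow_lt_one₀ h0 hε1 hN.ne'
  have hεN0 : 0 < ε ^ N := pow_pos hε N
  intro ℓ
  induction ℓ with
  | zero =>
      obtain ⟨W', hW', hdec⟩ := mulB_decomp hε hε1 hN F hF
      refine ⟨W', fun y => if y = (fun _ => none) then 1 else 0, hW', ⟨?_, ?_⟩, ?_⟩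
      · intro y
        by_cases hy : y = (fun _ => none) <;> simp [hy]
      · show ∑ y : Fin N → Option A, (if y = (fun _ => none) then (1:ℝ) else 0) = 1
        rw [Finset.sum_ite_eq' univ (fun _ => none : Fin N → Option A) (fun _ => (1:ℝ))]
        simp
      · intro x y
        have h : F * chain (fun _ => tensorPow N (eraCh A ε)) Φ 0
            = F * tensorPow N (eraCh A ε) := rfl
        rw [h, hdec x y, pow_one]
        ring
  | succ n ih =>
      obtain ⟨W', d, hW', hd, hdec⟩ := ih
      obtain ⟨W'', hW'', hdec2⟩ := mulB_decomp hε hε1 hN (W' * Φ n) (isStoch_mul hW' (hΦ n))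
      set d1 : (Fin N → Option A) → ℝ := fun z => ∑ w, d w * Φ n w z with hd1
      set d2 : (Fin N → Option A) → ℝ := fun y => ∑ z, d1 z * tensorPow N (eraCh A ε) z y
        with hd2
      have hd1nn : ∀ z, 0 ≤ d1 z := fun z =>
        Finset.sum_nonneg fun w _ => mul_nonneg (hd.1 w) (((hΦ n) w).1 z)
      have hd1sum : ∑ z, d1 z = 1 := by
        simp only [hd1]
        rw [Finset.sum_comm]
        have h : ∀ w, ∑ z, d w * Φ n w z = d w := by
          intro w; rw [← Finset.mul_sum, ((hΦ n) w).2, mul_one]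
        rw [Finset.sum_congr rfl fun w _ => h w, hd.2]
      have hd2nn : ∀ y, 0 ≤ d2 y := fun y =>
        Finset.sum_nonneg fun z _ => mul_nonneg (hd1nn z)
          (tensorPow_nonneg (fun u v => eraCh_nonneg h0 hε1.le u v) z y)
      have hd2sum : ∑ y, d2 y = 1 := by
        simp only [hd2]
        rw [Finset.sum_comm]
        have h : ∀ z, ∑ y, d1 z * tensorPow N (eraCh A ε) z y = d1 z := by
          intro z
          rw [← Finset.mul_sum, tensorPow_rowsum (fun x => eraCh_rowsum x) z, mul_one]
        rw [Finset.sum_congr rfl fun z _ => h z, hd1sum]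
      have hpowlt : (1 - ε ^ N) ^ (n+2) < 1 := pow_lt_one₀ (by linarith) (by linarith) (by omega)
      have hpownn : (0:ℝ) ≤ (1 - ε ^ N) ^ (n+1) := pow_nonneg (by linarith) _
      have hpowle : (1 - ε ^ N) ^ (n+1) ≤ 1 := pow_le_one₀ (by linarith) (by linarith)
      have hden : (0:ℝ) < 1 - (1 - ε ^ N) ^ (n+2) := by linarith
      refine ⟨W'', fun y => ((1 - ε ^ N) ^ (n+1) * ε ^ N * (if y = (fun _ => none) then 1 else 0)
          + (1 - (1 - ε ^ N) ^ (n+1)) * d2 y) / (1 - (1 - ε ^ N) ^ (n+2)), hW'', ⟨?_, ?_⟩, ?_⟩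
      · intro y
        apply div_nonneg _ hden.le
        apply add_nonneg
        · apply mul_nonneg (mul_nonneg hpownn hεN0.le)
          by_cases hy : y = (fun _ => none) <;> simp [hy]
        · exact mul_nonneg (by linarith) (hd2nn y)
      · rw [← Finset.sum_div, Finset.sum_add_distrib, ← Finset.mul_sum, ← Finset.mul_sum,
          hd2sum, Finset.sum_ite_eq' univ (fun _ => none : Fin N → Option A) (fun _ => (1:ℝ))]
        simp only [Finset.mem_univ, if_true, mul_one]
        rw [div_eq_one_iff_eq hden.ne']
        ring
      · intro x y
        have hassoc : F * chain (fun _ => tensorPow N (eraCh A ε)) Φ (n+1)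
            = ((F * chain (fun _ => tensorPow N (eraCh A ε)) Φ n) * Φ n) *
              tensorPow N (eraCh A ε) := by
          show F * (chain (fun _ => tensorPow N (eraCh A ε)) Φ n * Φ n *
            tensorPow N (eraCh A ε)) = _
          rw [← Matrix.mul_assoc, ← Matrix.mul_assoc]
        rw [hassoc]
        have hmid : ∀ z, ((F * chain (fun _ => tensorPow N (eraCh A ε)) Φ n) * Φ n) x z
            = (1 - ε ^ N) ^ (n+1) * (W' * Φ n) x z + (1 - (1 - ε ^ N) ^ (n+1)) * d1 z := by
          intro z
          rw [Matrix.mul_apply, Matrix.mul_apply]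
          simp only [hd1]
          rw [Finset.mul_sum, Finset.mul_sum, ← Finset.sum_add_distrib]
          apply Finset.sum_congr rfl
          intro w _
          rw [hdec x w]
          ring
        rw [Matrix.mul_apply, Finset.sum_congr rfl (fun z _ => by rw [hmid z])]
        rw [Finset.sum_congr rfl (fun z _ => add_mul _ _ _), Finset.sum_add_distrib]
        simp_rw [mul_assoc]
        rw [← Finset.mul_sum, ← Finset.mul_sum, ← Matrix.mul_apply, hdec2 x y]
        have hd2y : ∑ z, d1 z * tensorPow N (eraCh A ε) z y = d2 y := rfl
        rw [hd2y]
        set t : ℝ := (if y = (fun _ => none) then (1:ℝ) else 0) with ht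
        have hne : (1:ℝ) - (1 - ε ^ N) ^ (n+1+1) ≠ 0 := hden.ne'
        field_simp
        ring

lemma logsum2 {a1 a2 b1 b2 : ℝ} (ha1 : 0 ≤ a1) (ha2 : 0 ≤ a2) (hb1 : 0 ≤ b1) (hb2 : 0 ≤ b2)
    (h1 : b1 = 0 → a1 = 0) (h2 : b2 = 0 → a2 = 0) :
    (a1 + a2) * Real.logb 2 ((a1 + a2) / (b1 + b2))
      ≤ a1 * Real.logb 2 (a1 / b1) + a2 * Real.logb 2 (a2 / b2) := by
  have hlog : (a1 + a2) * Real.log ((a1 + a2) / (b1 + b2))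
      ≤ a1 * Real.log (a1 / b1) + a2 * Real.log (a2 / b2) := by
    by_cases ha1' : a1 = 0
    · subst ha1'
      simp only [zero_add, zero_mul]
      by_cases ha2' : a2 = 0
      · subst ha2'; simp
      · have ha2p : 0 < a2 := lt_of_le_of_ne ha2 (Ne.symm ha2')
        have hb2p : 0 < b2 := by
          rcases eq_or_lt_of_le hb2 with h | h
          · exact absurd (h2 h.symm) ha2'
          · exact h
        have hle : a2 / (b1 + b2) ≤ a2 / b2 :=
          div_le_div_of_nonneg_left ha2 hb2p (by linarith)
        exact mul_le_mul_of_nonneg_left (Real.log_le_log (by positivity) hle) ha2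
    · by_cases ha2' : a2 = 0
      · subst ha2'
        simp only [add_zero, zero_mul]
        have ha1p : 0 < a1 := lt_of_le_of_ne ha1 (Ne.symm ha1')
        have hb1p : 0 < b1 := by
          rcases eq_or_lt_of_le hb1 with h | h
          · exact absurd (h1 h.symm) ha1'
          · exact h
        have hle : a1 / (b1 + b2) ≤ a1 / b1 :=
          div_le_div_of_nonneg_left ha1 hb1p (by linarith)
        exact mul_le_mul_of_nonneg_left (Real.log_le_log (by positivity) hle) ha1
      · have ha1p : 0 < a1 := lt_of_le_of_ne ha1 (Ne.symm ha1')
        have ha2p : 0 < a2 := lt_of_le_of_ne ha2 (Ne.symm ha2')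
        have hb1p : 0 < b1 := by
          rcases eq_or_lt_of_le hb1 with h | h
          · exact absurd (h1 h.symm) ha1'
          · exact h
        have hb2p : 0 < b2 := by
          rcases eq_or_lt_of_le hb2 with h | h
          · exact absurd (h2 h.symm) ha2'
          · exact h
        have hs : (0:ℝ) < b1 + b2 := by linarith
        have hw1 : (0:ℝ) ≤ b1 / (b1 + b2) := by positivity
        have hw2 : (0:ℝ) ≤ b2 / (b1 + b2) := by positivity
        have hwsum : b1 / (b1 + b2) + b2 / (b1 + b2) = 1 := by field_simp
        have hc := Real.convexOn_mul_log.2 (Set.mem_Ici.mpr (by positivity : (0:ℝ) ≤ a1 / b1))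
          (Set.mem_Ici.mpr (by positivity : (0:ℝ) ≤ a2 / b2)) hw1 hw2 hwsum
        simp only [smul_eq_mul] at hc
        have harg : b1 / (b1 + b2) * (a1 / b1) + b2 / (b1 + b2) * (a2 / b2)
            = (a1 + a2) / (b1 + b2) := by field_simp
        rw [harg] at hc
        have hmul := mul_le_mul_of_nonneg_left hc hs.le
        have hLHS : (b1 + b2) * ((a1 + a2) / (b1 + b2) * Real.log ((a1 + a2) / (b1 + b2)))
            = (a1 + a2) * Real.log ((a1 + a2) / (b1 + b2)) := by
          rw [← mul_assoc, mul_div_cancel₀ _ hs.ne']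
        have hRHS : (b1 + b2) * (b1 / (b1 + b2) * (a1 / b1 * Real.log (a1 / b1))
              + b2 / (b1 + b2) * (a2 / b2 * Real.log (a2 / b2)))
            = a1 * Real.log (a1 / b1) + a2 * Real.log (a2 / b2) := by
          field_simp
        rw [hLHS, hRHS] at hmul
        exact hmul
  have hl2 : (0:ℝ) < Real.log 2 := Real.log_pos (by norm_num)
  simp only [Real.logb, ← mul_div_assoc]
  rw [← add_div]
  exact div_le_div_of_nonneg_right hlog hl2.le

lemma entropy_le_logb_card {α : Type} [Fintype α] (p : α → ℝ) (hp : IsDist p) :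
    ∑ x, p x * Real.logb 2 (p x)⁻¹ ≤ Real.logb 2 (Fintype.card α) := by
  have hne : Nonempty α := by
    by_contra h
    rw [not_nonempty_iff] at h
    have := hp.2
    rw [Finset.univ_eq_empty, Finset.sum_empty] at this
    norm_num at this
  have hK : (0:ℝ) < (Fintype.card α : ℝ) := by
    exact_mod_cast Fintype.card_pos_iff.mpr hne
  set K : ℝ := (Fintype.card α : ℝ) with hKdef
  have hlog : ∑ x, p x * Real.log (p x)⁻¹ ≤ Real.log K := by
    have hterm : ∀ x, p x * Real.log (p x)⁻¹ ≤ p x * Real.log K + (K⁻¹ - p x) := by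
      intro x
      by_cases hx : p x = 0
      · rw [hx]
        simp only [zero_mul, sub_zero, zero_add]
        positivity
      · have hpx : 0 < p x := lt_of_le_of_ne (hp.1 x) (Ne.symm hx)
        have hq : (0:ℝ) < (p x)⁻¹ / K := by positivity
        have h1 : Real.log ((p x)⁻¹ / K) ≤ (p x)⁻¹ / K - 1 := Real.log_le_sub_one_of_pos hq
        have h2 : Real.log ((p x)⁻¹ / K) = Real.log (p x)⁻¹ - Real.log K :=
          Real.log_div (by positivity) hK.ne'
        have h3 : p x * ((p x)⁻¹ / K - 1) = K⁻¹ - p x := by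
          field_simp
        have h4 := mul_le_mul_of_nonneg_left h1 hpx.le
        rw [h2, h3, mul_sub] at h4
        linarith
    calc ∑ x, p x * Real.log (p x)⁻¹
        ≤ ∑ x, (p x * Real.log K + (K⁻¹ - p x)) := Finset.sum_le_sum fun x _ => hterm x
      _ = (∑ x, p x) * Real.log K + ((Fintype.card α : ℝ) * K⁻¹ - ∑ x, p x) := by
          rw [Finset.sum_add_distrib, Finset.sum_sub_distrib, ← Finset.sum_mul,
            Finset.sum_const, Finset.card_univ, nsmul_eq_mul]
      _ = Real.log K := by
          rw [hp.2, one_mul, ← hKdef, mul_inv_cancel₀ hK.ne']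
          ring
  have hl2 : (0:ℝ) < Real.log 2 := Real.log_pos (by norm_num)
  simp only [Real.logb, ← mul_div_assoc]
  rw [← Finset.sum_div]
  exact div_le_div_of_nonneg_right hlog hl2.le

lemma mi_le_logb_card {α β : Type} [Fintype α] [Fintype β] (p : α → ℝ) (hp : IsDist p)
    (W : Matrix α β ℝ) (hW : IsStoch W) :
    mutualInfo p W ≤ Real.logb 2 (Fintype.card α) := by
  have hterm : ∀ x y, p x * W x y * Real.logb 2 (W x y / ∑ x', p x' * W x' y)
      ≤ p x * W x y * Real.logb 2 (p x)⁻¹ := by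
    intro x y
    by_cases hx : p x = 0
    · rw [hx]; simp
    · by_cases hw : W x y = 0
      · rw [hw]; simp
      · have hpx : 0 < p x := lt_of_le_of_ne (hp.1 x) (Ne.symm hx)
        have hwx : 0 < W x y := lt_of_le_of_ne ((hW x).1 y) (Ne.symm hw)
        have hq : p x * W x y ≤ ∑ x', p x' * W x' y :=
          Finset.single_le_sum (f := fun x' => p x' * W x' y)
            (fun x' _ => mul_nonneg (hp.1 x') ((hW x').1 y)) (Finset.mem_univ x)
        have hqpos : 0 < ∑ x', p x' * W x' y := lt_of_lt_of_le (by positivity) hq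
        have hratio : W x y / ∑ x', p x' * W x' y ≤ (p x)⁻¹ := by
          rw [div_le_iff₀ hqpos]
          calc W x y = (p x)⁻¹ * (p x * W x y) := by field_simp
            _ ≤ (p x)⁻¹ * ∑ x', p x' * W x' y :=
                mul_le_mul_of_nonneg_left hq (inv_nonneg.mpr hpx.le)
        apply mul_le_mul_of_nonneg_left _ (by positivity : (0:ℝ) ≤ p x * W x y)
        exact Real.logb_le_logb_of_le (by norm_num) (by positivity) hratio
  calc mutualInfo p W
      ≤ ∑ x, ∑ y, p x * W x y * Real.logb 2 (p x)⁻¹ :=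
        Finset.sum_le_sum fun x _ => Finset.sum_le_sum fun y _ => hterm x y
    _ = ∑ x, p x * Real.logb 2 (p x)⁻¹ := by
        apply Finset.sum_congr rfl
        intro x _
        have h : ∀ y, p x * W x y * Real.logb 2 (p x)⁻¹
            = p x * Real.logb 2 (p x)⁻¹ * W x y := fun y => by ring
        rw [Finset.sum_congr rfl fun y _ => h y, ← Finset.mul_sum, (hW x).2, mul_one]
    _ ≤ Real.logb 2 (Fintype.card α) := entropy_le_logb_card p hp

lemma mix_bound {α β : Type} [Fintype α] [Fintype β] (p : α → ℝ) (hp : IsDist p)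
    (W W' : Matrix α β ℝ) (hW' : IsStoch W') (d : β → ℝ) (hd : IsDist d)
    (t : ℝ) (ht0 : 0 < t) (ht1 : t ≤ 1)
    (hdec : ∀ x y, W x y = t * W' x y + (1 - t) * d y) :
    mutualInfo p W ≤ t * mutualInfo p W' := by
  have hterm : ∀ x y, p x * W x y * Real.logb 2 (W x y / ∑ x', p x' * W x' y)
      ≤ t * (p x * W' x y * Real.logb 2 (W' x y / ∑ x', p x' * W' x' y)) := by
    intro x y
    by_cases hx : p x = 0
    · rw [hx]; simp
    · have hpx : 0 < p x := lt_of_le_of_ne (hp.1 x) (Ne.symm hx)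
      set a1 : ℝ := t * (p x * W' x y) with ha1
      set a2 : ℝ := (1 - t) * (p x * d y) with ha2
      set b1 : ℝ := t * (p x * ∑ x', p x' * W' x' y) with hb1
      have hq' : p x * W' x y ≤ ∑ x', p x' * W' x' y :=
        Finset.single_le_sum (f := fun x' => p x' * W' x' y)
          (fun x' _ => mul_nonneg (hp.1 x') ((hW' x').1 y)) (Finset.mem_univ x)
      have hq'nn : 0 ≤ ∑ x', p x' * W' x' y :=
        Finset.sum_nonneg fun x' _ => mul_nonneg (hp.1 x') ((hW' x').1 y)
      have ha1nn : 0 ≤ a1 := mul_nonneg ht0.le (mul_nonneg hpx.le ((hW' x).1 y))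
      have ha2nn : 0 ≤ a2 := mul_nonneg (by linarith) (mul_nonneg hpx.le (hd.1 y))
      have hb1nn : 0 ≤ b1 := mul_nonneg ht0.le (mul_nonneg hpx.le hq'nn)
      have himp1 : b1 = 0 → a1 = 0 := by
        intro hb
        have h0 : p x * ∑ x', p x' * W' x' y = 0 := by
          rcases mul_eq_zero.mp hb with h | h
          · exact absurd h ht0.ne'
          · exact h
        have h1 : (∑ x', p x' * W' x' y) = 0 := by
          rcases mul_eq_zero.mp h0 with h | h
          · exact absurd h hx
          · exact h
        have h2 : p x * W' x y = 0 := le_antisymm (h1 ▸ hq')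
          (mul_nonneg hpx.le ((hW' x).1 y))
        rw [ha1, h2, mul_zero]
      have hsum : ∑ x', p x' * W x' y = t * (∑ x', p x' * W' x' y) + (1 - t) * d y := by
        have h : ∀ x', p x' * W x' y
            = t * (p x' * W' x' y) + ((1 - t) * d y) * p x' := by
          intro x'; rw [hdec x' y]; ring
        rw [Finset.sum_congr rfl fun x' _ => h x', Finset.sum_add_distrib, ← Finset.mul_sum,
          ← Finset.mul_sum, hp.2, mul_one]
      have hW_eq : p x * W x y = a1 + a2 := by rw [hdec x y]; ring
      have hq_eq : p x * (∑ x', p x' * W x' y) = b1 + a2 := by rw [hsum, ha2, hb1]; ring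
      have hdiv : W x y / (∑ x', p x' * W x' y) = (a1 + a2) / (b1 + a2) := by
        rw [← hW_eq, ← hq_eq, mul_div_mul_left _ _ hx]
      have hls := logsum2 ha1nn ha2nn hb1nn ha2nn himp1 (fun h => h)
      have ha2term : a2 * Real.logb 2 (a2 / a2) = 0 := by
        by_cases h : a2 = 0
        · rw [h]; simp
        · rw [div_self h, Real.logb_one, mul_zero]
      have ha1term : a1 * Real.logb 2 (a1 / b1)
          = t * (p x * W' x y * Real.logb 2 (W' x y / ∑ x', p x' * W' x' y)) := by
        have htp : t * p x ≠ 0 := ne_of_gt (mul_pos ht0 hpx)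
        have e1 : a1 = (t * p x) * W' x y := by rw [ha1]; ring
        have e2 : b1 = (t * p x) * (∑ x', p x' * W' x' y) := by rw [hb1]; ring
        rw [e1, e2, mul_div_mul_left _ _ htp]
        ring
      calc p x * W x y * Real.logb 2 (W x y / ∑ x', p x' * W x' y)
          = (a1 + a2) * Real.logb 2 ((a1 + a2) / (b1 + a2)) := by rw [hdiv, hW_eq]
        _ ≤ a1 * Real.logb 2 (a1 / b1) + a2 * Real.logb 2 (a2 / a2) := hls
        _ = t * (p x * W' x y * Real.logb 2 (W' x y / ∑ x', p x' * W' x' y)) := by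
            rw [ha2term, ha1term, add_zero]
  rw [mutualInfo, mutualInfo, Finset.mul_sum]
  apply Finset.sum_le_sum
  intro x _
  rw [Finset.mul_sum]
  exact Finset.sum_le_sum fun y _ => hterm x y

end Aux

/-- For a line network of `L` identical packet erasure channels with
erasure probability `ε`, the batched-code capacity with batch size `1` and inner
block-length `N` equals `C_L(1,N) = ((1-ε^N)^L / N) log|A|`: every batched code with
batch size `1` has rate at most this value, and repetition recoding attains it. -/
theorem stmt3 {A : Type} [Fintype A] [DecidableEq A] (hA : 2 ≤ Fintype.card A)
    (ε : ℝ) (hε : 0 < ε) (hε1 : ε < 1)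
    (L N : ℕ) (hL : 0 < L) (hN : 0 < N) :
    (∀ (F : Matrix (Fin 1 → A) (Fin N → Option A) ℝ)
       (Φ : ℕ → Matrix (Fin N → Option A) (Fin N → Option A) ℝ)
       (p : (Fin 1 → A) → ℝ),
       IsStoch F → (∀ ℓ, IsStoch (Φ ℓ)) → IsDist p →
       (1 / (N : ℝ)) * mutualInfo p (endToEnd L 1 N F (fun _ => eraCh A ε) Φ)
         ≤ ((1 - ε ^ N) ^ L / (N : ℝ)) * Real.logb 2 (Fintype.card A)) ∧
    (∃ p : (Fin 1 → A) → ℝ, IsDist p ∧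
       (1 / (N : ℝ)) * mutualInfo p
           (endToEnd L 1 N (repF A N) (fun _ => eraCh A ε) (fun _ => repPhi A N))
         = ((1 - ε ^ N) ^ L / (N : ℝ)) * Real.logb 2 (Fintype.card A)) := by
  have h0 : (0:ℝ) ≤ ε := hε.le
  have hεN1 : ε ^ N < 1 := pow_lt_one₀ h0 hε1 hN.ne'
  have hεN0 : 0 < ε ^ N := pow_pos hε N
  have hKpos : 0 < Fintype.card A := by omega
  constructor
  · intro F Φ p hF hΦ hp
    obtain ⟨W', d, hW', hd, hdec⟩ := decomp hε hε1 hN F Φ hF hΦ (L - 1)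
    have hLL : L - 1 + 1 = L := Nat.sub_add_cancel hL
    rw [hLL] at hdec
    have ht0 : (0:ℝ) < (1 - ε ^ N) ^ L := pow_pos (by linarith) L
    have ht1 : (1 - ε ^ N) ^ L ≤ 1 := pow_le_one₀ (by linarith) (by linarith)
    have hmix := mix_bound p hp (endToEnd L 1 N F (fun _ => eraCh A ε) Φ) W' hW' d hd
      ((1 - ε ^ N) ^ L) ht0 ht1 (fun x y => hdec x y)
    have hmi := mi_le_logb_card p hp W' hW'
    have hcard : ((Fintype.card (Fin 1 → A) : ℕ) : ℝ) = ((Fintype.card A : ℕ) : ℝ) := by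
      rw [Fintype.card_fun]
      simp
    rw [hcard] at hmi
    have hfinal : mutualInfo p (endToEnd L 1 N F (fun _ => eraCh A ε) Φ)
        ≤ (1 - ε ^ N) ^ L * Real.logb 2 (Fintype.card A) :=
      le_trans hmix (mul_le_mul_of_nonneg_left hmi ht0.le)
    calc (1 / (N:ℝ)) * mutualInfo p (endToEnd L 1 N F (fun _ => eraCh A ε) Φ)
        ≤ (1 / (N:ℝ)) * ((1 - ε ^ N) ^ L * Real.logb 2 (Fintype.card A)) := by
          apply mul_le_mul_of_nonneg_left hfinal
          positivity
      _ = ((1 - ε ^ N) ^ L / (N:ℝ)) * Real.logb 2 (Fintype.card A) := by ring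
  · refine ⟨fun _ => ((Fintype.card A : ℝ))⁻¹, ⟨?_, ?_⟩, ?_⟩
    · intro x
      positivity
    · rw [Finset.sum_const, Finset.card_univ, nsmul_eq_mul, Fintype.card_fun]
      simp only [Fintype.card_fin, pow_one]
      exact mul_inv_cancel₀ (Nat.cast_ne_zero.mpr hKpos.ne')
    · rw [achieve hε hε1 hN L hL hKpos]
      ring
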